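/- For every integer t ≥ 2, ι(S_{C₄}^t) = 3·4^{t−2}, where S_{C₄}^t is the t-th generalized Sierpiński graph over the 4-cycle C₄. -/

import Mathlib

/-- The closed neighborhood `N[A]` of a set of vertices. -/
def closedNbhd {V : Type*} (G : SimpleGraph V) (A : Set V) : Set V :=
  {v | v ∈ A ∨ ∃ a ∈ A, G.Adj a v}

/-- A set of vertices is independent if it contains no edge. -/
def IndepSet {V : Type*} (G : SimpleGraph V) (S : Set V) : Prop :=
  ∀ u ∈ S, ∀ v ∈ S, ¬ G.Adj u v

/-- `A` is isolating if the vertices outside `N[A]` form an independent set. -/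
def IsIsolating {V : Type*} (G : SimpleGraph V) (A : Set V) : Prop :=
  IndepSet G (closedNbhd G A)ᶜ

/-- The isolation number `ι(G)`. -/
noncomputable def isolationNum {V : Type*} (G : SimpleGraph V) : ℕ :=
  sInf {n | ∃ A : Set V, IsIsolating G A ∧ A.ncard = n}

/-- `D` is a dominating set if `N[D] = V(G)`. -/
def IsDominating {V : Type*} (G : SimpleGraph V) (D : Set V) : Prop :=
  closedNbhd G D = Set.univ

/-- The domination number `γ(G)`. -/
noncomputable def dominationNum {V : Type*} (G : SimpleGraph V) : ℕ :=
  sInf {n | ∃ D : Set V, IsDominating G D ∧ D.ncard = n}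
/-- The generalized Sierpiński graph `S_G^t` on words of length `t` over `V(G)`. -/
def sierpinskiGraph {V : Type*} (G : SimpleGraph V) (t : ℕ) : SimpleGraph (Fin t → V) where
  Adj u v := ∃ i : Fin t, (∀ j, j < i → u j = v j) ∧ u i ≠ v i ∧ G.Adj (u i) (v i) ∧
      ∀ j, i < j → u j = v i ∧ v j = u i
  symm := by
    constructor
    rintro u v ⟨i, h1, h2, h3, h4⟩
    exact ⟨i, fun j hj => (h1 j hj).symm, h2.symm, h3.symm,
      fun j hj => ⟨(h4 j hj).2, (h4 j hj).1⟩⟩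
  loopless := by
    constructor
    rintro u ⟨i, -, h2, -, -⟩
    exact h2 rfl

/-- The extreme vertices of `S_G^t`: the constant words. -/
def extremeVertices (V : Type*) (t : ℕ) : Set (Fin t → V) :=
  {w | ∃ x : V, w = fun _ => x}

namespace SierC4

abbrev C4 := SimpleGraph.cycleGraph 4

/-! ### Finite core facts on `S_{C₄}^2` encoded on pairs -/

def ladj (x y : Fin 4 × Fin 4) : Prop :=
  (x.1 = y.1 ∧ C4.Adj x.2 y.2) ∨ (C4.Adj x.1 y.1 ∧ x.2 = y.1 ∧ y.2 = x.1)

instance (x y : Fin 4 × Fin 4) : Decidable (ladj x y) := by unfold ladj; infer_instance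

def covp (b1 b2 x : Fin 4 × Fin 4) : Prop := x = b1 ∨ x = b2 ∨ ladj b1 x ∨ ladj b2 x

instance (b1 b2 x : Fin 4 × Fin 4) : Decidable (covp b1 b2 x) := by unfold covp; infer_instance

def BB (c : Fin 4) : Finset (Fin 4 × Fin 4) := {(c, c), (1 + c, 2 + c), (3 + c, 2 + c)}

def cov3 (c : Fin 4) (x : Fin 4 × Fin 4) : Prop := x ∈ BB c ∨ ∃ b ∈ BB c, ladj b x

instance (c : Fin 4) (x : Fin 4 × Fin 4) : Decidable (cov3 c x) := by unfold cov3; infer_instance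

lemma ladj_symm : ∀ x y, ladj x y → ladj y x := by decide

lemma up1 : ∀ c : Fin 4, ∀ x y, ¬cov3 c x → ¬cov3 c y → ¬ladj x y := by decide

lemma up2 : ∀ (c z : Fin 4), ¬cov3 c (z, z) → z = 2 + c := by decide

lemma auxc : ∀ c : Fin 4, (c ≠ 2 + c) ∧ ¬C4.Adj c (2 + c) := by decide

lemma BBcard : ∀ c, (BB c).card = 3 := by decide

lemma lowlem : ∀ b1 b2 : Fin 4 × Fin 4, ∃ x, ¬covp b1 b2 x ∧ x.1 ≠ x.2 ∧
    ∃ y, ¬covp b1 b2 y ∧ y.1 ≠ y.2 ∧ ladj x y := by decide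

/-! ### Prefix/local coordinates on words of length `m+2` -/

variable {m : ℕ}

def i0 (m : ℕ) : Fin (m + 2) := ⟨m, by omega⟩
def i1 (m : ℕ) : Fin (m + 2) := ⟨m + 1, by omega⟩

def pre (u : Fin (m + 2) → Fin 4) : Fin m → Fin 4 := fun j => u ⟨j.1, by omega⟩

def locp (u : Fin (m + 2) → Fin 4) : Fin 4 × Fin 4 := (u (i0 m), u (i1 m))

def lastw (w : Fin m → Fin 4) : Fin 4 := if h : 0 < m then w ⟨m - 1, by omega⟩ else 0

def lastc (u : Fin (m + 2) → Fin 4) : Fin 4 := lastw (pre u)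

def glue (w : Fin m → Fin 4) (x : Fin 4 × Fin 4) : Fin (m + 2) → Fin 4 :=
  fun j => if h : j.1 < m then w ⟨j.1, h⟩ else if j.1 = m then x.1 else x.2

lemma pre_glue (w : Fin m → Fin 4) (x : Fin 4 × Fin 4) : pre (glue w x) = w := by
  funext j
  show glue w x ⟨j.1, _⟩ = w j
  simp only [glue]
  rw [dif_pos j.2]

lemma locp_glue (w : Fin m → Fin 4) (x : Fin 4 × Fin 4) : locp (glue w x) = x := by
  have c1 : ¬(m + 1 < m) := by omega
  have c2 : ¬(m + 1 = m) := by omega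
  have h0 : glue w x (i0 m) = x.1 := by simp [glue, i0]
  have h1 : glue w x (i1 m) = x.2 := by simp [glue, i1, c1, c2]
  show (glue w x (i0 m), glue w x (i1 m)) = x
  rw [h0, h1]

lemma glue_pre_locp (u : Fin (m + 2) → Fin 4) : glue (pre u) (locp u) = u := by
  funext j
  simp only [glue, pre, locp]
  rcases Nat.lt_or_ge j.1 m with h | h
  · rw [dif_pos h]
  · rw [dif_neg (by omega)]
    rcases Nat.lt_or_ge j.1 (m + 1) with h2 | h2
    · have : j = i0 m := Fin.ext (show (j : ℕ) = m by omega)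
      rw [if_pos (by omega), this]
    · have : j = i1 m := Fin.ext (show (j : ℕ) = m + 1 by have := j.2; omega)
      rw [if_neg (by have := j.2; omega), this]

lemma glue_injective (w : Fin m → Fin 4) : Function.Injective (glue w) := by
  intro x y h
  have := congrArg locp h
  rwa [locp_glue, locp_glue] at this

lemma lastc_eq_of_pos (hm : 0 < m) (u : Fin (m + 2) → Fin 4) :
    lastc u = u ⟨m - 1, by omega⟩ := by
  simp only [lastc, lastw, dif_pos hm]
  rfl

abbrev SG (m : ℕ) := sierpinskiGraph C4 (m + 2)

/-! ### Structure of adjacency in `S_{C₄}^{m+2}` -/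

lemma adj_of_local {u v : Fin (m + 2) → Fin 4} (h1 : pre u = pre v)
    (h2 : ladj (locp u) (locp v)) : (SG m).Adj u v := by
  have hpre : ∀ j : Fin (m + 2), j.1 < m → u j = v j := by
    intro j hj
    exact congrFun h1 ⟨j.1, hj⟩
  rcases h2 with ⟨e0, a1⟩ | ⟨a0, e1, e2⟩
  · refine ⟨i1 m, ?_, a1.ne, a1, ?_⟩
    · intro j hj
      have hj' : (j : ℕ) < m + 1 := hj
      rcases Nat.lt_or_ge j.1 m with h | h
      · exact hpre j h
      · have : j = i0 m := Fin.ext (show (j : ℕ) = m by omega)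
        rw [this]; exact e0
    · intro j hj
      have hj' : m + 1 < (j : ℕ) := hj
      exact absurd j.2 (by omega)
  · refine ⟨i0 m, fun j hj => hpre j hj, a0.ne, a0, ?_⟩
    intro j hj
    have hj' : m < (j : ℕ) := hj
    have : j = i1 m := Fin.ext (show (j : ℕ) = m + 1 by have := j.2; omega)
    rw [this]; exact ⟨e1, e2⟩

lemma adj_elim {u v : Fin (m + 2) → Fin 4} (h : (SG m).Adj u v) :
    (pre u = pre v ∧ ladj (locp u) (locp v)) ∨
      ∃ x, locp u = (x, x) ∧ (lastc u = x ∨ C4.Adj (lastc u) x) := by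
  obtain ⟨i, hlt, hne, hadj, hgt⟩ := h
  have him : i.1 < m ∨ i.1 = m ∨ i.1 = m + 1 := by have := i.2; omega
  rcases him with hi | hi | hi
  · right
    refine ⟨v i, ?_, ?_⟩
    · have h0 : u (i0 m) = v i := (hgt (i0 m) (show (i : ℕ) < m by omega)).1
      have h1 : u (i1 m) = v i := (hgt (i1 m) (show (i : ℕ) < m + 1 by omega)).1
      simp only [locp, h0, h1]
    · have hm : 0 < m := by omega
      rcases Nat.lt_or_ge i.1 (m - 1) with hi2 | hi2
      · left
        have h5 := (hgt ⟨m - 1, by omega⟩ (show (i : ℕ) < m - 1 from hi2)).1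
        rw [lastc_eq_of_pos hm]
        exact h5
      · right
        have hieq : i = (⟨m - 1, show m - 1 < m + 2 by omega⟩ : Fin (m + 2)) :=
          Fin.ext (show (i : ℕ) = m - 1 by omega)
        rw [lastc_eq_of_pos hm]
        have h5 : u ⟨m - 1, show m - 1 < m + 2 by omega⟩ = u i := congrArg u hieq.symm
        rw [h5]
        exact hadj
  · left
    have hieq : i = i0 m := Fin.ext (show (i : ℕ) = m from hi)
    subst hieq
    constructor
    · funext j
      exact hlt ⟨j.1, by omega⟩ (show (j : ℕ) < m from j.2)
    · have hg := hgt (i1 m) (show m < m + 1 by omega)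
      exact Or.inr ⟨hadj, hg.1, hg.2⟩
  · left
    have hieq : i = i1 m := Fin.ext (show (i : ℕ) = m + 1 from hi)
    subst hieq
    constructor
    · funext j
      exact hlt ⟨j.1, by omega⟩ (show (j : ℕ) < m + 1 by have := j.2; omega)
    · exact Or.inl ⟨hlt (i0 m) (show m < m + 1 by omega), hadj⟩

/-! ### The upper-bound construction -/

def AF (m : ℕ) : Finset (Fin (m + 2) → Fin 4) :=
  Finset.univ.filter fun u => locp u ∈ BB (lastc u)

def AA (m : ℕ) : Set (Fin (m + 2) → Fin 4) := ↑(AF m)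

lemma mem_AA {u : Fin (m + 2) → Fin 4} : u ∈ AA m ↔ locp u ∈ BB (lastc u) := by
  simp [AA, AF]

lemma covered_of_cov3 (u : Fin (m + 2) → Fin 4) (h : cov3 (lastc u) (locp u)) :
    u ∈ closedNbhd (SG m) (AA m) := by
  rcases h with h | ⟨b, hb, hladj⟩
  · exact Or.inl (mem_AA.mpr h)
  · refine Or.inr ⟨glue (pre u) b, ?_, ?_⟩
    · apply mem_AA.mpr
      rw [locp_glue]
      simp only [lastc, pre_glue]
      simpa only [lastc] using hb
    · exact adj_of_local (pre_glue _ _) (by rw [locp_glue]; exact hladj)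

lemma isolating_AA : IsIsolating (SG m) (AA m) := by
  intro U hU V hV hadj
  have hU' : ¬cov3 (lastc U) (locp U) := fun h => hU (covered_of_cov3 U h)
  have hV' : ¬cov3 (lastc V) (locp V) := fun h => hV (covered_of_cov3 V h)
  rcases adj_elim hadj with ⟨hp, hl⟩ | ⟨x, hx, hcase⟩
  · have hcc : lastc V = lastc U := by simp only [lastc, hp]
    rw [hcc] at hV'
    exact up1 (lastc U) _ _ hU' hV' hl
  · have h2 : ¬cov3 (lastc U) (x, x) := by rw [← hx]; exact hU'
    have h3 := up2 _ _ h2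
    rcases hcase with h4 | h4
    · exact (auxc (lastc U)).1 (h4.trans h3)
    · rw [h3] at h4
      exact (auxc (lastc U)).2 h4

lemma ncard_AA : (AA m).ncard = 3 * 4 ^ m := by
  rw [AA, Set.ncard_coe_finset]
  rw [Finset.card_eq_sum_card_fiberwise
    (f := pre) (t := Finset.univ) (fun x _ => Finset.mem_univ _)]
  have hfib : ∀ w : Fin m → Fin 4, ((AF m).filter fun u => pre u = w).card = 3 := by
    intro w
    have himg : ((AF m).filter fun u => pre u = w) = (BB (lastw w)).image (glue w) := by
      ext u
      simp only [Finset.mem_filter, AF, Finset.mem_univ, true_and, Finset.mem_image]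
      constructor
      · rintro ⟨h1, rfl⟩
        exact ⟨locp u, by simpa only [lastc] using h1, glue_pre_locp u⟩
      · rintro ⟨x, hx, rfl⟩
        refine ⟨?_, pre_glue w x⟩
        rw [locp_glue]
        simp only [lastc, pre_glue]
        exact hx
    rw [himg, Finset.card_image_of_injective _ (glue_injective w), BBcard]
  rw [Finset.sum_congr rfl (fun w _ => hfib w), Finset.sum_const, Finset.card_univ,
    smul_eq_mul]
  simp [Fintype.card_fun, mul_comm]

/-! ### The lower bound -/

lemma pair_cover (s : Finset (Fin 4 × Fin 4)) (hs : s.card ≤ 2) :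
    ∃ b1 b2, ∀ z ∈ s, z = b1 ∨ z = b2 := by
  have h3 : s.card = 0 ∨ s.card = 1 ∨ s.card = 2 := by omega
  rcases h3 with h | h | h
  · exact ⟨(0, 0), (0, 0), by simp [Finset.card_eq_zero.mp h]⟩
  · obtain ⟨x, rfl⟩ := Finset.card_eq_one.mp h
    exact ⟨x, x, fun z hz => by simpa using hz⟩
  · obtain ⟨x, y, -, rfl⟩ := Finset.card_eq_two.mp h
    exact ⟨x, y, fun z hz => by simpa using hz⟩

lemma lower (A : Set (Fin (m + 2) → Fin 4)) (hA : IsIsolating (SG m) A) :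
    3 * 4 ^ m ≤ A.ncard := by
  classical
  have hfin : A.Finite := A.toFinite
  rw [Set.ncard_eq_toFinset_card A hfin]
  set a := hfin.toFinset with ha
  rw [Finset.card_eq_sum_card_fiberwise
    (f := pre) (s := a) (t := Finset.univ) (fun x _ => Finset.mem_univ _)]
  have hfib : ∀ w : Fin m → Fin 4, 3 ≤ (a.filter fun u => pre u = w).card := by
    intro w
    by_contra hcon
    set F := a.filter fun u => pre u = w with hF
    have hcard : (F.image locp).card ≤ 2 :=
      le_trans (Finset.card_image_le) (by omega)
    obtain ⟨b1, b2, hb⟩ := pair_cover _ hcard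
    have hmemF : ∀ u ∈ F, locp u = b1 ∨ locp u = b2 := fun u hu =>
      hb _ (Finset.mem_image_of_mem locp hu)
    obtain ⟨x, hx, hxne, y, hy, hyne, hxy⟩ := lowlem b1 b2
    have key : ∀ z : Fin 4 × Fin 4, z.1 ≠ z.2 → ¬covp b1 b2 z →
        glue w z ∉ closedNbhd (SG m) A := by
      intro z hzne hz hmem
      rcases hmem with hmem | ⟨a', ha', hadj⟩
      · have : glue w z ∈ F := by
          rw [hF, Finset.mem_filter]
          exact ⟨(Set.Finite.mem_toFinset hfin).mpr hmem, pre_glue w z⟩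
        rcases hmemF _ this with h | h
        · rw [locp_glue] at h
          exact hz (Or.inl h)
        · rw [locp_glue] at h
          exact hz (Or.inr (Or.inl h))
      · rcases adj_elim hadj.symm with ⟨hp, hl⟩ | ⟨c, hc, -⟩
        · have ha'F : a' ∈ F := by
            rw [hF, Finset.mem_filter]
            exact ⟨(Set.Finite.mem_toFinset hfin).mpr ha', by rw [← hp, pre_glue]⟩
          rw [locp_glue] at hl
          have hl' := ladj_symm _ _ hl
          rcases hmemF _ ha'F with h | h
          · rw [h] at hl'
            exact hz (Or.inr (Or.inr (Or.inl hl')))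
          · rw [h] at hl'
            exact hz (Or.inr (Or.inr (Or.inr hl')))
        · rw [locp_glue] at hc
          exact hzne (by rw [hc])
    have hUV : (SG m).Adj (glue w x) (glue w y) := by
      apply adj_of_local (by rw [pre_glue, pre_glue])
      rw [locp_glue, locp_glue]
      exact hxy
    exact hA _ (key x hxne hx) _ (key y hyne hy) hUV
  calc 3 * 4 ^ m = ∑ _w : Fin m → Fin 4, 3 := by
        rw [Finset.sum_const, Finset.card_univ, smul_eq_mul]
        simp [Fintype.card_fun, mul_comm]
    _ ≤ ∑ w : Fin m → Fin 4, (a.filter fun u => pre u = w).card :=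
        Finset.sum_le_sum fun w _ => hfib w

end SierC4

/-- For every `t ≥ 2`, `ι(S_{C₄}^t) = 3 · 4^{t−2}`. -/
theorem isolation_sierpinski_cycleFour (t : ℕ) (ht : 2 ≤ t) :
    isolationNum (sierpinskiGraph (SimpleGraph.cycleGraph 4) t) = 3 * 4 ^ (t - 2) := by
  obtain ⟨m, rfl⟩ : ∃ m, t = m + 2 := ⟨t - 2, by omega⟩
  have h2 : m + 2 - 2 = m := by omega
  rw [h2]
  have hmem : 3 * 4 ^ m ∈
      {n | ∃ A : Set (Fin (m + 2) → Fin 4),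
        IsIsolating (sierpinskiGraph (SimpleGraph.cycleGraph 4) (m + 2)) A ∧ A.ncard = n} :=
    ⟨SierC4.AA m, SierC4.isolating_AA, SierC4.ncard_AA⟩
  apply le_antisymm
  · exact Nat.sInf_le hmem
  · apply le_csInf ⟨_, hmem⟩
    rintro n ⟨A, hA, rfl⟩
    exact SierC4.lower A hA
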